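/- Every kid digit string s in which no digit appears more than 3 times consecutively is eventually periodic under Z with preperiod plus period at most 9: there exist m ≤ 8 and 1 ≤ τ ≤ 2 such that Z^{m+τ}(s) = Z^m(s). -/

import Mathlib

/-- Run-length encoding of a digit string. -/
def rle : List ℕ → List (ℕ × ℕ)
  | [] => []
  | a :: t =>
    match rle t with
    | [] => [(a, 1)]
    | (b, n) :: r => if a = b then (b, n + 1) :: r else (a, 1) :: (b, n) :: r

/-- The "look-and-say-the-biggest" map: each maximal run of the digit `a` of length `n`
is replaced by the decimal digits of `max n a` followed by the digit `a`.
(When `n ≤ 9` this is just the two digits `max n a`, `a`.) -/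
def Z (s : List ℕ) : List ℕ :=
  ((rle s).map fun p => (Nat.digits 10 (max p.2 p.1)).reverse ++ [p.1]).flatten

/-- `r` is a run-length representation of the digit string `s`: all run lengths are
positive, consecutive base digits differ, and the expansion of `r` equals `s`. -/
def IsRLE (r : List (ℕ × ℕ)) (s : List ℕ) : Prop :=
  (∀ p ∈ r, 1 ≤ p.2) ∧ (r.map Prod.fst).Chain' (· ≠ ·) ∧
    (r.map fun p => List.replicate p.2 p.1).flatten = s

def Z2 (s : List ℕ) : List ℕ :=
  ((rle s).map fun p => [max p.2 p.1, p.1]).flatten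

lemma rle_cons_eq (a : ℕ) (t : List ℕ) :
    rle (a :: t) = match rle t with
      | [] => [(a, 1)]
      | (b, n) :: r => if a = b then (b, n + 1) :: r else (a, 1) :: (b, n) :: r := rfl

lemma rle_nil_iff (s : List ℕ) : rle s = [] ↔ s = [] := by
  cases s with
  | nil => simp [rle]
  | cons a t =>
    rw [rle_cons_eq]
    cases h : rle t with
    | nil => simp
    | cons p r => cases p with | mk b n => by_cases hab : a = b <;> simp [hab]

lemma rle_head (a : ℕ) (t : List ℕ) : ∃ n r, rle (a :: t) = (a, n) :: r ∧ 1 ≤ n := by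
  rw [rle_cons_eq]
  cases h : rle t with
  | nil => exact ⟨1, [], rfl, le_refl 1⟩
  | cons p r =>
    cases p with | mk b n =>
    by_cases hab : a = b
    · subst hab; exact ⟨n + 1, r, by simp, by omega⟩
    · exact ⟨1, (b, n) :: r, by simp [hab], le_refl 1⟩

lemma rle_pos {s : List ℕ} : ∀ p ∈ rle s, 1 ≤ p.2 := by
  induction s with
  | nil => simp [rle]
  | cons a t ih =>
    rw [rle_cons_eq]
    cases h : rle t with
    | nil => simp
    | cons p r =>
      cases p with | mk b n =>
      have hb : 1 ≤ n := by have := ih (b, n); rw [h] at this; exact this (by simp)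
      have hr : ∀ q ∈ r, 1 ≤ q.2 := by
        intro q hq; have := ih q; rw [h] at this; exact this (by simp [hq])
      by_cases hab : a = b
      · simp only [hab, if_pos rfl]
        intro q hq
        rcases List.mem_cons.mp hq with h1 | h1
        · subst h1; omega
        · exact hr q h1
      · simp only [if_neg hab]
        intro q hq
        rcases List.mem_cons.mp hq with h1 | h1
        · subst h1; exact le_refl 1
        rcases List.mem_cons.mp h1 with h2 | h2
        · subst h2; exact hb
        · exact hr q h2

lemma rle_flatten (s : List ℕ) :
    ((rle s).map fun p => List.replicate p.2 p.1).flatten = s := by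
  induction s with
  | nil => simp [rle]
  | cons a t ih =>
    rw [rle_cons_eq]
    cases h : rle t with
    | nil =>
      have : t = [] := (rle_nil_iff t).mp h
      subst this; simp
    | cons p r =>
      cases p with | mk b n =>
      rw [h] at ih
      by_cases hab : a = b
      · subst hab
        simp only [if_pos, if_true, eq_self_iff_true]
        simp only [List.map_cons, List.flatten_cons] at ih ⊢
        rw [List.replicate_succ, List.cons_append, ih]
      · simp only [if_neg hab]
        simp only [List.map_cons, List.flatten_cons] at ih ⊢
        rw [ih]; rfl

lemma rle_chain (s : List ℕ) : ((rle s).map Prod.fst).Chain' (· ≠ ·) := by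
  induction s with
  | nil => simp [rle]; exact List.isChain_nil
  | cons a t ih =>
    rw [rle_cons_eq]
    cases h : rle t with
    | nil => simp; exact List.isChain_singleton a
    | cons p r =>
      cases p with | mk b n =>
      rw [h] at ih
      by_cases hab : a = b
      · simpa [hab] using ih
      · simp only [if_neg hab, List.map_cons]
        exact List.isChain_cons_cons.mpr ⟨hab, ih⟩

lemma mem_of_rle {s : List ℕ} {p : ℕ × ℕ} (hp : p ∈ rle s) : p.1 ∈ s := by
  have h1 : p.1 ∈ ((rle s).map fun q => List.replicate q.2 q.1).flatten := by
    rw [List.mem_flatten]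
    exact ⟨List.replicate p.2 p.1, List.mem_map.mpr ⟨p, hp, rfl⟩,
      List.mem_replicate.mpr ⟨by have := rle_pos p hp; omega, rfl⟩⟩
  rwa [rle_flatten] at h1

def NoFour (s : List ℕ) : Prop := ∀ (x : ℕ) (t₁ t₂ : List ℕ), s ≠ t₁ ++ x :: x :: x :: x :: t₂

lemma run_le_three {s : List ℕ} (hnf : NoFour s) : ∀ p ∈ rle s, p.2 ≤ 3 := by
  intro p hp
  by_contra hlt
  obtain ⟨r₁, r₂, hr⟩ := List.append_of_mem hp
  obtain ⟨k, hk⟩ : ∃ k, p.2 = k + 4 := ⟨p.2 - 4, by omega⟩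
  apply hnf p.1 ((r₁.map fun q => List.replicate q.2 q.1).flatten)
    (List.replicate k p.1 ++ (r₂.map fun q => List.replicate q.2 q.1).flatten)
  rw [← rle_flatten s, hr]
  simp [hk, List.replicate_succ]

lemma Z_eq_Z2 {s : List ℕ} (h3 : ∀ d ∈ s, d ≤ 3) (hnf : NoFour s) : Z s = Z2 s := by
  unfold Z Z2
  congr 1
  apply List.map_congr_left
  intro p hp
  have h1 : 1 ≤ p.2 := rle_pos p hp
  have h2 : p.2 ≤ 3 := run_le_three hnf p hp
  have h4 : p.1 ≤ 3 := h3 p.1 (mem_of_rle hp)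
  have hd : Nat.digits 10 (max p.2 p.1) = [max p.2 p.1] :=
    Nat.digits_of_lt 10 (max p.2 p.1) (by omega) (by omega)
  rw [hd]; rfl

lemma no_four_chunks : ∀ (l : List (ℕ × ℕ)), (l.map Prod.fst).Chain' (· ≠ ·) →
    ∀ (x : ℕ) (t₁ t₂ : List ℕ),
      (l.map fun q => [max q.2 q.1, q.1]).flatten ≠ t₁ ++ x :: x :: x :: x :: t₂ := by
  intro l
  induction l with
  | nil => intro _ x t₁ t₂ h; simp at h
  | cons q l' ih =>
    intro hc x t₁ t₂ h
    simp only [List.map_cons, List.flatten_cons, List.cons_append, List.nil_append] at h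
    match t₁, h with
    | [], h =>
      simp only [List.nil_append, List.cons.injEq] at h
      obtain ⟨h1, h2, h3⟩ := h
      cases l' with
      | nil => simp at h3
      | cons q' l'' =>
        simp only [List.map_cons, List.flatten_cons, List.cons_append, List.cons.injEq] at h3
        have : q.1 ≠ q'.1 := (List.isChain_cons_cons.mp hc).1
        omega
    | [y], h =>
      simp only [List.cons_append, List.nil_append, List.cons.injEq] at h
      obtain ⟨h1, h2, h3⟩ := h
      cases l' with
      | nil => simp at h3
      | cons q' l'' =>
        simp only [List.map_cons, List.flatten_cons, List.cons_append, List.cons.injEq] at h3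
        have : q.1 ≠ q'.1 := (List.isChain_cons_cons.mp hc).1
        omega
    | y :: z :: t₁', h =>
      simp only [List.cons_append, List.cons.injEq] at h
      obtain ⟨h1, h2, h3⟩ := h
      have hc' : (l'.map Prod.fst).Chain' (· ≠ ·) := by
        simp only [List.map_cons] at hc; exact hc.tail
      exact ih hc' x t₁' t₂ h3

lemma kid_Z2 {s : List ℕ} (h3 : ∀ d ∈ s, d ≤ 3) (hnf : NoFour s) : ∀ d ∈ Z2 s, d ≤ 3 := by
  intro d hd
  unfold Z2 at hd
  rw [List.mem_flatten] at hd
  obtain ⟨l, hl, hdl⟩ := hd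
  rw [List.mem_map] at hl
  obtain ⟨p, hp, rfl⟩ := hl
  have h1 : p.2 ≤ 3 := run_le_three hnf p hp
  have h2 : p.1 ≤ 3 := h3 p.1 (mem_of_rle hp)
  simp only [List.mem_cons, List.mem_singleton] at hdl
  rcases hdl with rfl | rfl | h
  · omega
  · exact h2
  · simp at h

lemma noFour_Z2 {s : List ℕ} (hnf : NoFour s) : NoFour (Z2 s) :=
  fun x t₁ t₂ => no_four_chunks (rle s) (rle_chain s) x t₁ t₂

lemma head_Z2 (b : ℕ) (t : List ℕ) : ∃ c w, Z2 (b :: t) = c :: w ∧ b ≤ c := by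
  obtain ⟨n, r, hr, _⟩ := rle_head b t
  exact ⟨max n b, b :: (r.map fun p => [max p.2 p.1, p.1]).flatten,
    by simp [Z2, hr], le_max_right n b⟩

lemma getLast?_Z2 (s : List ℕ) (hs : s ≠ []) : (Z2 s).getLast? = s.getLast? := by
  have h0 : rle s ≠ [] := fun h => hs ((rle_nil_iff s).mp h)
  rcases List.eq_nil_or_concat (rle s) with h | ⟨L, p, hL⟩
  · exact absurd h h0
  have hp : p ∈ rle s := by rw [hL]; simp [List.concat]
  have h1 : 1 ≤ p.2 := rle_pos p hp
  have hrepl : (List.replicate p.2 p.1).getLast? = some p.1 := by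
    obtain ⟨k, hk⟩ : ∃ k, p.2 = k + 1 := ⟨p.2 - 1, by omega⟩
    rw [hk, List.replicate_succ', List.getLast?_append]
    simp
  have hlast : s.getLast? = some p.1 := by
    conv_lhs => rw [← rle_flatten s, hL]
    simp only [List.concat_eq_append, List.map_append, List.flatten_append]
    rw [List.getLast?_append]
    simp [hrepl]
  have hlast2 : (Z2 s).getLast? = some p.1 := by
    unfold Z2
    rw [hL]
    simp only [List.concat_eq_append, List.map_append, List.flatten_append]
    rw [List.getLast?_append]
    simp
  rw [hlast, hlast2]

lemma rle_append : ∀ (u v : List ℕ) (a b : ℕ), u.getLast? = some a → v.head? = some b →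
    a ≠ b → rle (u ++ v) = rle u ++ rle v := by
  intro u
  induction u with
  | nil => intro v a b h; simp at h
  | cons x u' ih =>
    intro v a b hu hv hab
    cases v with
    | nil => simp at hv
    | cons y v' =>
      have hy : y = b := by simpa using hv
      subst hy
      cases u' with
      | nil =>
        have hx : x = a := by simpa using hu
        subst hx
        obtain ⟨n, r, hr, _⟩ := rle_head y v'
        simp only [List.cons_append, List.nil_append]
        rw [rle_cons_eq, hr]
        simp [hab, rle_cons_eq, rle]
      | cons z u'' =>
        have hu' : (z :: u'').getLast? = some a := by
          rwa [List.getLast?_cons_cons] at hu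
        have ihv := ih (y :: v') a y hu' hv hab
        obtain ⟨m, r, hr, _⟩ := rle_head z u''
        obtain ⟨m', r', hr', _⟩ := rle_head z (u'' ++ y :: v')
        have : (z, m') :: r' = ((z, m) :: r) ++ rle (y :: v') := by
          rw [← hr', ← hr, ← ihv]; rfl
        simp only [List.cons_append, List.cons.injEq, Prod.mk.injEq] at this
        obtain ⟨⟨_, hm⟩, hrr⟩ := this
        show rle (x :: (z :: (u'' ++ y :: v'))) = rle (x :: z :: u'') ++ rle (y :: v')
        rw [rle_cons_eq]
        rw [hr']
        rw [rle_cons_eq x (z :: u''), hr]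
        by_cases hxz : x = z
        · simp [hxz, hm, hrr]
        · simp [hxz, hm, hrr]

lemma Z2_append (u v : List ℕ) (a b : ℕ) (hu : u.getLast? = some a) (hv : v.head? = some b)
    (hab : a ≠ b) : Z2 (u ++ v) = Z2 u ++ Z2 v := by
  unfold Z2
  rw [rle_append u v a b hu hv hab, List.map_append, List.flatten_append]

lemma iter_split : ∀ (k : ℕ) (u v : List ℕ) (a b : ℕ), u.getLast? = some a →
    v.head? = some b → a < b → Z2^[k] (u ++ v) = Z2^[k] u ++ Z2^[k] v := by
  intro k
  induction k with
  | zero => intro u v a b _ _ _; rfl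
  | succ k ih =>
    intro u v a b hu hv hab
    have hune : u ≠ [] := by intro h; subst h; simp at hu
    cases v with
    | nil => simp at hv
    | cons y v' =>
      have hy : y = b := by simpa using hv
      subst hy
      obtain ⟨c, w, hZ2v, hbc⟩ := head_Z2 y v'
      rw [Function.iterate_succ_apply, Function.iterate_succ_apply, Function.iterate_succ_apply,
        Z2_append u (y :: v') a y hu hv (by omega)]
      have h1 : (Z2 u).getLast? = some a := by rw [getLast?_Z2 u hune, hu]
      have h2 : (Z2 (y :: v')).head? = some c := by rw [hZ2v]; rfl
      exact ih (Z2 u) (Z2 (y :: v')) a c h1 h2 (by omega)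

lemma ascent_or_sorted (s : List ℕ) :
    (∃ u v a b, u.getLast? = some a ∧ v.head? = some b ∧ a < b ∧ s = u ++ v) ∨
      s.Chain' (fun x y => y ≤ x) := by
  induction s with
  | nil => exact Or.inr List.isChain_nil
  | cons x t ih =>
    rcases ih with ⟨u, v, a, b, hu, hv, hab, rfl⟩ | hs
    · cases u with
      | nil => simp at hu
      | cons z u' =>
        exact Or.inl ⟨x :: z :: u', v, a, b, by rwa [List.getLast?_cons_cons], hv, hab, rfl⟩
    · cases t with
      | nil => exact Or.inr (List.isChain_singleton x)
      | cons y t' =>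
        by_cases hxy : y ≤ x
        · exact Or.inr (List.isChain_cons_cons.mpr ⟨hxy, hs⟩)
        · exact Or.inl ⟨[x], y :: t', x, y, rfl, rfl, by omega, rfl⟩

lemma noFour_append_left {u v : List ℕ} (h : NoFour (u ++ v)) : NoFour u := by
  intro x t₁ t₂ he
  exact h x t₁ (t₂ ++ v) (by rw [he]; simp)

lemma noFour_append_right {u v : List ℕ} (h : NoFour (u ++ v)) : NoFour v := by
  intro x t₁ t₂ he
  exact h x (u ++ t₁) t₂ (by rw [he]; simp)

lemma sorted_canon : ∀ (s : List ℕ), s.Chain' (fun x y => y ≤ x) → (∀ d ∈ s, d ≤ 3) →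
    ∃ a b c d, s = List.replicate a 3 ++ List.replicate b 2 ++ List.replicate c 1 ++
      List.replicate d 0 := by
  intro s
  induction s with
  | nil => exact fun _ _ => ⟨0, 0, 0, 0, rfl⟩
  | cons x t ih =>
    intro hs h3
    obtain ⟨a, b, c, d, rfl⟩ := ih hs.tail (fun d hd => h3 d (List.mem_cons_of_mem x hd))
    have hx : x ≤ 3 := h3 x (List.mem_cons_self)
    have hhead : ∀ y, (List.replicate a 3 ++ List.replicate b 2 ++ List.replicate c 1 ++
        List.replicate d 0).head? = some y → y ≤ x := by
      intro y hy
      cases hh : (List.replicate a 3 ++ List.replicate b 2 ++ List.replicate c 1 ++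
          List.replicate d 0) with
      | nil => rw [hh] at hy; simp at hy
      | cons w t' =>
        rw [hh] at hy
        have hw : w = y := by simpa using hy
        subst hw
        have := List.isChain_cons_cons.mp (by rwa [hh] at hs)
        exact this.1
    interval_cases x
    · refine ⟨0, 0, 0, d + 1, ?_⟩
      cases a with
      | succ a' => exact absurd (hhead 3 (by simp [List.replicate_succ])) (by omega)
      | zero =>
      cases b with
      | succ b' => exact absurd (hhead 2 (by simp [List.replicate_succ])) (by omega)
      | zero =>
      cases c with
      | succ c' => exact absurd (hhead 1 (by simp [List.replicate_succ])) (by omega)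
      | zero => simp [List.replicate_succ]
    · refine ⟨0, 0, c + 1, d, ?_⟩
      cases a with
      | succ a' => exact absurd (hhead 3 (by simp [List.replicate_succ])) (by omega)
      | zero =>
      cases b with
      | succ b' => exact absurd (hhead 2 (by simp [List.replicate_succ])) (by omega)
      | zero => simp [List.replicate_succ]
    · refine ⟨0, b + 1, c, d, ?_⟩
      cases a with
      | succ a' => exact absurd (hhead 3 (by simp [List.replicate_succ])) (by omega)
      | zero => simp [List.replicate_succ]
    · exact ⟨a + 1, b, c, d, by simp [List.replicate_succ]⟩

lemma main_aux : ∀ (n : ℕ) (s : List ℕ), s.length ≤ n → (∀ d ∈ s, d ≤ 3) → NoFour s →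
    Z2^[8] s = Z2^[6] s := by
  intro n
  induction n with
  | zero =>
    intro s hl _ _
    have : s = [] := List.eq_nil_of_length_eq_zero (by omega)
    subst this
    rw [Function.iterate_fixed (show Z2 [] = [] from rfl),
      Function.iterate_fixed (show Z2 [] = [] from rfl)]
  | succ n ih =>
    intro s hl h3 hnf
    rcases ascent_or_sorted s with ⟨u, v, a, b, hu, hv, hab, rfl⟩ | hsort
    · have hune : u ≠ [] := by intro h; subst h; simp at hu
      have hvne : v ≠ [] := by intro h; subst h; simp at hv
      have hlu : u.length ≤ n := by
        have := (List.length_append : (u ++ v).length = _)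
        have : 1 ≤ v.length := List.length_pos_iff.mpr hvne
        simp [List.length_append] at hl; omega
      have hlv : v.length ≤ n := by
        have : 1 ≤ u.length := List.length_pos_iff.mpr hune
        simp [List.length_append] at hl; omega
      have h3u : ∀ d ∈ u, d ≤ 3 := fun d hd => h3 d (by simp [hd])
      have h3v : ∀ d ∈ v, d ≤ 3 := fun d hd => h3 d (by simp [hd])
      rw [iter_split 8 u v a b hu hv hab, iter_split 6 u v a b hu hv hab,
        ih u hlu h3u (noFour_append_left hnf), ih v hlv h3v (noFour_append_right hnf)]
    · obtain ⟨a, b, c, d, rfl⟩ := sorted_canon s hsort h3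
      have ha : a ≤ 3 := by
        by_contra h
        obtain ⟨k, rfl⟩ : ∃ k, a = k + 4 := ⟨a - 4, by omega⟩
        exact hnf 3 [] (List.replicate k 3 ++ List.replicate b 2 ++ List.replicate c 1 ++
          List.replicate d 0) (by simp [List.replicate_succ])
      have hb : b ≤ 3 := by
        by_contra h
        obtain ⟨k, rfl⟩ : ∃ k, b = k + 4 := ⟨b - 4, by omega⟩
        exact hnf 2 (List.replicate a 3) (List.replicate k 2 ++ List.replicate c 1 ++
          List.replicate d 0) (by simp [List.replicate_succ])
      have hc : c ≤ 3 := by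
        by_contra h
        obtain ⟨k, rfl⟩ : ∃ k, c = k + 4 := ⟨c - 4, by omega⟩
        exact hnf 1 (List.replicate a 3 ++ List.replicate b 2) (List.replicate k 1 ++
          List.replicate d 0) (by simp [List.replicate_succ])
      have hd : d ≤ 3 := by
        by_contra h
        obtain ⟨k, rfl⟩ : ∃ k, d = k + 4 := ⟨d - 4, by omega⟩
        exact hnf 0 (List.replicate a 3 ++ List.replicate b 2 ++ List.replicate c 1)
          (List.replicate k 0) (by simp [List.replicate_succ])
      clear hl h3 hnf hsort ih
      interval_cases a <;> interval_cases b <;> interval_cases c <;> interval_cases d <;> decide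

lemma iter_Z_eq_Z2 : ∀ (k : ℕ) (s : List ℕ), (∀ d ∈ s, d ≤ 3) → NoFour s →
    Z^[k] s = Z2^[k] s := by
  intro k
  induction k with
  | zero => intro s _ _; rfl
  | succ k ih =>
    intro s h3 hnf
    rw [Function.iterate_succ_apply, Function.iterate_succ_apply, Z_eq_Z2 h3 hnf]
    exact ih (Z2 s) (kid_Z2 h3 hnf) (noFour_Z2 hnf)

lemma runs_exist_four : ∀ (t₁ : List ℕ) (x : ℕ) (t₂ : List ℕ),
    ∃ p ∈ rle (t₁ ++ x :: x :: x :: x :: t₂), 4 ≤ p.2 := by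
  intro t₁
  induction t₁ with
  | nil =>
    intro x t₂
    obtain ⟨n, r, hr, hn⟩ := rle_head x t₂
    have h2 : rle (x :: x :: t₂) = (x, n + 1) :: r := by
      rw [rle_cons_eq, hr]; simp
    have h3 : rle (x :: x :: x :: t₂) = (x, n + 2) :: r := by
      rw [rle_cons_eq, h2]; simp
    have h4 : rle (x :: x :: x :: x :: t₂) = (x, n + 3) :: r := by
      rw [rle_cons_eq, h3]; simp
    exact ⟨(x, n + 3), by simp [h4], by omega⟩
  | cons y t₁' ih =>
    intro x t₂
    obtain ⟨p, hp, hp4⟩ := ih x t₂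
    cases hw : t₁' ++ x :: x :: x :: x :: t₂ with
    | nil => simp at hw
    | cons z w' =>
      rw [hw] at hp
      obtain ⟨m, r, hr, _⟩ := rle_head z w'
      show ∃ p ∈ rle (y :: (t₁' ++ x :: x :: x :: x :: t₂)), 4 ≤ p.2
      rw [hw, rle_cons_eq, hr]
      rw [hr] at hp
      by_cases hyz : y = z
      · simp only [hyz, if_pos rfl]
        rcases List.mem_cons.mp hp with h1 | h1
        · exact ⟨(z, m + 1), by simp, by rw [h1] at hp4; simp at hp4 ⊢; omega⟩
        · exact ⟨p, by simp [h1], hp4⟩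
      · simp only [if_neg hyz]
        exact ⟨p, by simp [List.mem_cons.mp hp], hp4⟩

lemma noFour_of_runs {s : List ℕ} (hrun : ∀ p ∈ rle s, p.2 ≤ 3) : NoFour s := by
  intro x t₁ t₂ he
  obtain ⟨p, hp, hp4⟩ := runs_exist_four t₁ x t₂
  rw [← he] at hp
  have := hrun p hp
  omega


/-- Small kid seeds: every kid string with run lengths ≤ 3 is eventually periodic
under `Z` with preperiod at most 8 and period at most 2. -/
theorem kid_eventually_periodic (s : List ℕ) (hkid : ∀ d ∈ s, d ≤ 3)
    (hrun : ∀ p ∈ rle s, p.2 ≤ 3) :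
    ∃ m ≤ 8, ∃ τ, 1 ≤ τ ∧ τ ≤ 2 ∧ Z^[m + τ] s = Z^[m] s := by
  have hnf : NoFour s := noFour_of_runs hrun
  refine ⟨6, by omega, 2, by omega, by omega, ?_⟩
  rw [iter_Z_eq_Z2 8 s hkid hnf, iter_Z_eq_Z2 6 s hkid hnf]
  exact main_aux s.length s (le_refl _) hkid hnf
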